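/- Suppose $(\alpha,\beta)$ is a Bailey pair relative to $a$. Then for any nonnegative integer $M$, $\sum_{L=0}^M \frac{a^L q^{L^2}}{(q)_{M-L}(aq)_{M+L}} \alpha_L = \sum_{L=0}^M \frac{a^L q^{L^2}}{(q)_{M-L}} \beta_L$. -/

import Mathlib

open Finset

/-- The $q$-Pochhammer symbol $(x;q)_n$. -/
noncomputable def qp (q x : ℂ) (n : ℕ) : ℂ := ∏ k ∈ Finset.range n, (1 - x * q ^ k)

lemma qp_zero (q x : ℂ) : qp q x 0 = 1 := by simp [qp]

lemma qp_succ (q x : ℂ) (n : ℕ) : qp q x (n + 1) = qp q x n * (1 - x * q ^ n) := by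
  simp [qp, Finset.prod_range_succ]

lemma qp_succ' (q x : ℂ) (n : ℕ) : qp q x (n + 1) = (1 - x) * qp q (x * q) n := by
  rw [qp, Finset.prod_range_succ', qp]
  have h : ∀ k ∈ Finset.range n, (1 - x * q ^ (k + 1)) = (1 - (x * q) * q ^ k) :=
    fun k _ => by ring
  rw [Finset.prod_congr rfl h, pow_zero, mul_one, mul_comm]

lemma qp_add (q x : ℂ) (m n : ℕ) : qp q x (m + n) = qp q x m * qp q (x * q ^ m) n := by
  rw [qp, Finset.prod_range_add, qp, qp]
  congr 1
  exact Finset.prod_congr rfl fun k _ => by rw [pow_add]; ring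

/-- Gaussian binomial coefficient as a complex number. -/
noncomputable def cb (q : ℂ) (n j : ℕ) : ℂ :=
  if j ≤ n then qp q q n / (qp q q j * qp q q (n - j)) else 0

lemma cb_zero (q : ℂ) (n : ℕ) (hq0 : ∀ m : ℕ, qp q q m ≠ 0) : cb q n 0 = 1 := by
  simp [cb, qp_zero, div_self (hq0 n)]

lemma cb_self (q : ℂ) (n : ℕ) (hq0 : ∀ m : ℕ, qp q q m ≠ 0) : cb q n n = 1 := by
  simp [cb, qp_zero, div_self (hq0 n)]

lemma cb_pascal (q : ℂ) (hq0 : ∀ m : ℕ, qp q q m ≠ 0) (n j : ℕ) :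
    cb q (n + 1) (j + 1) = cb q n j + q ^ (j + 1) * cb q n (j + 1) := by
  rcases lt_trichotomy (j + 1) (n + 1) with h | h | h
  · -- j + 1 ≤ n
    have hj : j + 1 ≤ n := by omega
    obtain ⟨m, hm⟩ : ∃ m, n = j + 1 + m := ⟨n - (j + 1), by omega⟩
    subst hm
    have e1 : j + 1 + m + 1 - (j + 1) = m + 1 := by omega
    have e2 : j + 1 + m - j = m + 1 := by omega
    have e3 : j + 1 + m - (j + 1) = m := by omega
    simp only [cb, if_pos (by omega : j + 1 ≤ j + 1 + m + 1),
      if_pos (by omega : j ≤ j + 1 + m), if_pos (by omega : j + 1 ≤ j + 1 + m), e1, e2, e3]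
    have hqj : qp q q j ≠ 0 := hq0 j
    have hqm : qp q q m ≠ 0 := hq0 m
    have hfj : (1 : ℂ) - q * q ^ j ≠ 0 := by
      intro h0
      apply hq0 (j + 1); rw [qp_succ]; rw [h0]; ring
    have hfm : (1 : ℂ) - q * q ^ m ≠ 0 := by
      intro h0
      apply hq0 (m + 1); rw [qp_succ]; rw [h0]; ring
    rw [show j + 1 + m + 1 = (j + 1 + m) + 1 by ring, qp_succ q q (j + 1 + m),
      qp_succ q q j, qp_succ q q m]
    field_simp
    ring
  · -- j = n
    have hj : j = n := by omega
    subst hj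
    have h0 : cb q j (j + 1) = 0 := by simp [cb]
    rw [h0, cb_self q (j+1) hq0, cb_self q j hq0]; ring
  · -- j + 1 > n + 1
    have h1 : cb q (n + 1) (j + 1) = 0 := by simp [cb]; omega
    have h2 : cb q n j = 0 := by simp [cb]; omega
    have h3 : cb q n (j + 1) = 0 := by simp [cb]; omega
    rw [h1, h2, h3]; ring

lemma key_identity (q : ℂ) (hq0 : ∀ m : ℕ, qp q q m ≠ 0) :
    ∀ n : ℕ, ∀ b : ℂ,
      ∑ j ∈ Finset.range (n + 1),
        cb q n j * q ^ (j ^ 2) * b ^ j * qp q (b * q ^ (j + 1)) (n - j) = 1 := by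
  intro n
  induction n with
  | zero =>
    intro b
    simp [cb_zero q 0 hq0, qp_zero]
  | succ n IH =>
    intro b
    -- IH specialized at b * q, rewritten
    have IH' : ∑ j ∈ Finset.range (n + 1),
        cb q n j * q ^ (j ^ 2 + j) * b ^ j * qp q (b * q ^ (j + 2)) (n - j) = 1 := by
      rw [← IH (b * q)]
      refine Finset.sum_congr rfl fun j _ => ?_
      rw [show b * q * q ^ (j + 1) = b * q ^ (j + 2) by ring, mul_pow]
      ring
    -- Define T over range (n+2)
    set T : ℕ → ℂ := fun j =>
      cb q n j * q ^ (j ^ 2 + j) * b ^ j * qp q (b * q ^ (j + 1)) (n + 1 - j) with hT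
    have hTsum : ∑ j ∈ Finset.range (n + 2), T j
        = 1 - ∑ j ∈ Finset.range (n + 1),
            cb q n j * q ^ ((j + 1) ^ 2) * b ^ (j + 1) * qp q (b * q ^ (j + 2)) (n - j) := by
      rw [Finset.sum_range_succ]
      have hlast : T (n + 1) = 0 := by
        simp [hT, cb, Nat.lt_irrefl]
      rw [hlast, add_zero]
      have hsplit : ∀ j ∈ Finset.range (n + 1),
          T j = cb q n j * q ^ (j ^ 2 + j) * b ^ j * qp q (b * q ^ (j + 2)) (n - j)
              - cb q n j * q ^ ((j + 1) ^ 2) * b ^ (j + 1) * qp q (b * q ^ (j + 2)) (n - j) := by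
        intro j hj
        rw [Finset.mem_range] at hj
        have e : n + 1 - j = (n - j) + 1 := by omega
        rw [hT]
        simp only
        rw [e, qp_succ' q (b * q ^ (j + 1)) (n - j),
          show b * q ^ (j + 1) * q = b * q ^ (j + 2) by ring]
        ring
      rw [Finset.sum_congr rfl hsplit, Finset.sum_sub_distrib, IH']
    -- Now the main goal
    rw [Finset.sum_range_succ']
    have hterm : ∀ k ∈ Finset.range (n + 1),
        cb q (n + 1) (k + 1) * q ^ ((k + 1) ^ 2) * b ^ (k + 1) *
            qp q (b * q ^ (k + 1 + 1)) (n + 1 - (k + 1))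
          = cb q n k * q ^ ((k + 1) ^ 2) * b ^ (k + 1) * qp q (b * q ^ (k + 2)) (n - k)
            + T (k + 1) := by
      intro k hk
      simp only [hT]
      rw [cb_pascal q hq0 n k]
      simp only [show n + 1 - (k + 1) = n - k from by omega,
        show k + 1 + 1 = k + 2 from rfl]
      ring
    rw [Finset.sum_congr rfl hterm, Finset.sum_add_distrib]
    have hT0 : cb q (n + 1) 0 * q ^ (0 ^ 2) * b ^ 0 * qp q (b * q ^ (0 + 1)) (n + 1 - 0)
        = T 0 := by
      rw [cb_zero q (n + 1) hq0, hT]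
      simp [cb_zero q n hq0]
    rw [hT0, add_assoc, ← Finset.sum_range_succ' T (n + 1), hTsum]
    ring

lemma divided_identity (q b : ℂ) (hq0 : ∀ m : ℕ, qp q q m ≠ 0)
    (hb : ∀ k : ℕ, qp q (b * q) k ≠ 0) (n : ℕ) :
    ∑ k ∈ Finset.range (n + 1),
        b ^ k * q ^ (k ^ 2) / (qp q q k * qp q q (n - k) * qp q (b * q) k)
      = 1 / (qp q q n * qp q (b * q) n) := by
  have hterm : ∀ k ∈ Finset.range (n + 1),
      b ^ k * q ^ (k ^ 2) / (qp q q k * qp q q (n - k) * qp q (b * q) k)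
        = (cb q n k * q ^ (k ^ 2) * b ^ k * qp q (b * q ^ (k + 1)) (n - k))
            / (qp q q n * qp q (b * q) n) := by
    intro k hk
    rw [Finset.mem_range] at hk
    have hkn : k ≤ n := by omega
    have hsplit : qp q (b * q) n = qp q (b * q) k * qp q (b * q ^ (k + 1)) (n - k) := by
      have := qp_add q (b * q) k (n - k)
      rw [show k + (n - k) = n by omega, show b * q * q ^ k = b * q ^ (k + 1) by ring] at this
      exact this
    have hnz : qp q (b * q ^ (k + 1)) (n - k) ≠ 0 := by
      intro h0
      apply hb n
      rw [hsplit, h0, mul_zero]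
    have hD1 : qp q q k * qp q q (n - k) * qp q (b * q) k ≠ 0 :=
      mul_ne_zero (mul_ne_zero (hq0 k) (hq0 (n - k))) (hb k)
    have hD2 : qp q q n * qp q (b * q) n ≠ 0 := mul_ne_zero (hq0 n) (hb n)
    have hcb : cb q n k * (qp q q k * qp q q (n - k)) = qp q q n := by
      rw [cb, if_pos hkn, div_mul_eq_mul_div,
        mul_div_assoc, div_self (mul_ne_zero (hq0 k) (hq0 (n - k))), mul_one]
    rw [div_eq_div_iff hD1 hD2, hsplit]
    linear_combination
      (-(b ^ k * q ^ k ^ 2 * qp q (b * q ^ (k + 1)) (n - k) * qp q (b * q) k)) * hcb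
  rw [Finset.sum_congr rfl hterm, ← Finset.sum_div, key_identity q hq0 n b]

lemma bailey_inner_sum (q a : ℂ) (hq0 : ∀ m : ℕ, qp q q m ≠ 0)
    (haq : ∀ m : ℕ, qp q (a * q) m ≠ 0) (M i : ℕ) (hi : i < M + 1) :
    ∑ L ∈ Finset.Ico i (M + 1),
        a ^ L * q ^ (L ^ 2) / (qp q q (M - L) * (qp q q (L - i) * qp q (a * q) (L + i)))
      = a ^ i * q ^ (i ^ 2) / (qp q q (M - i) * qp q (a * q) (M + i)) := by
  set n := M - i with hn
  set b := a * q ^ (2 * i) with hbdef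
  have hsplit : ∀ k : ℕ, qp q (a * q) (2 * i + k) = qp q (a * q) (2 * i) * qp q (b * q) k := by
    intro k
    have := qp_add q (a * q) (2 * i) k
    rw [show a * q * q ^ (2 * i) = b * q by rw [hbdef]; ring] at this
    exact this
  have hb : ∀ k : ℕ, qp q (b * q) k ≠ 0 := by
    intro k h0
    apply haq (2 * i + k)
    rw [hsplit k, h0, mul_zero]
  rw [Finset.sum_Ico_eq_sum_range]
  rw [show M + 1 - i = n + 1 by omega]
  have hterm : ∀ k ∈ Finset.range (n + 1),
      a ^ (i + k) * q ^ ((i + k) ^ 2)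
          / (qp q q (M - (i + k)) * (qp q q (i + k - i) * qp q (a * q) (i + k + i)))
        = (a ^ i * q ^ (i ^ 2) / qp q (a * q) (2 * i)) *
            (b ^ k * q ^ (k ^ 2) / (qp q q k * qp q q (n - k) * qp q (b * q) k)) := by
    intro k hk
    rw [Finset.mem_range] at hk
    rw [show M - (i + k) = n - k by omega, show i + k - i = k by omega,
      show i + k + i = 2 * i + k by omega, hsplit k, hbdef, div_mul_div_comm]
    congr 1
    · ring
    · ring
  rw [Finset.sum_congr rfl hterm, ← Finset.mul_sum, divided_identity q b hq0 hb n]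
  rw [show M + i = 2 * i + n by omega, hsplit n,
    div_mul_div_comm, mul_one]
  ring_nf

/-- Bailey's lemma in the $\rho_1,\rho_2\to\infty$ specialization:
$\sum_{L=0}^M \frac{a^L q^{L^2}}{(q)_{M-L}(aq)_{M+L}}\alpha_L
 = \sum_{L=0}^M \frac{a^L q^{L^2}}{(q)_{M-L}}\beta_L$. -/
theorem bailey_lemma_special (q a : ℂ) (α β : ℕ → ℂ)
    (hBP : ∀ L, β L = ∑ i ∈ Finset.range (L + 1),
      α i / (qp q q (L - i) * qp q (a * q) (L + i)))
    (hq0 : ∀ n : ℕ, qp q q n ≠ 0)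
    (haq : ∀ n : ℕ, qp q (a * q) n ≠ 0)
    (M : ℕ) :
    ∑ L ∈ Finset.range (M + 1),
        a ^ L * q ^ (L ^ 2) / (qp q q (M - L) * qp q (a * q) (M + L)) * α L
      = ∑ L ∈ Finset.range (M + 1), a ^ L * q ^ (L ^ 2) / qp q q (M - L) * β L := by
  have hR : ∀ L ∈ Finset.range (M + 1),
      a ^ L * q ^ (L ^ 2) / qp q q (M - L) * β L
        = ∑ i ∈ Finset.range (L + 1),
            (a ^ L * q ^ (L ^ 2) / (qp q q (M - L) * (qp q q (L - i) * qp q (a * q) (L + i))))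
              * α i := by
    intro L _
    rw [hBP L, Finset.mul_sum]
    exact Finset.sum_congr rfl fun i _ => by ring
  rw [Finset.sum_congr rfl hR]
  have hswap := Finset.sum_Ico_Ico_comm 0 (M + 1) (fun i L =>
    (a ^ L * q ^ (L ^ 2) / (qp q q (M - L) * (qp q q (L - i) * qp q (a * q) (L + i)))) * α i)
  simp only [Nat.Ico_zero_eq_range] at hswap
  rw [← hswap]
  symm
  refine Finset.sum_congr rfl fun i hi => ?_
  rw [← Finset.sum_mul, bailey_inner_sum q a hq0 haq M i (Finset.mem_range.mp hi)]
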